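/- Every finite set of points in the plane in general position that contains six points in convex position (a convex hexagon, not necessarily empty) contains an empty convex pentagon (5-hole). -/

import Mathlib

/-- A finite set of points in the plane is in general position if no three
distinct points of it are collinear. -/
def GenPos (S : Finset (ℝ × ℝ)) : Prop :=
  ∀ p ∈ S, ∀ q ∈ S, ∀ r ∈ S, p ≠ q → p ≠ r → q ≠ r →
    ¬ Collinear ℝ ({p, q, r} : Set (ℝ × ℝ))

/-- A finite set of points is in convex position if every point of it is an
extreme point of its convex hull. -/
def ConvexPos (H : Finset (ℝ × ℝ)) : Prop :=
  ∀ p ∈ H, p ∈ Set.extremePoints ℝ (convexHull ℝ (H : Set (ℝ × ℝ)))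

/-- `IsHole S H k` : `H` is a `k`-hole (empty convex `k`-gon) of `S`. -/
def IsHole (S H : Finset (ℝ × ℝ)) (k : ℕ) : Prop :=
  H ⊆ S ∧ H.card = k ∧ ConvexPos H ∧
    ∀ p ∈ S, p ∉ H → p ∉ convexHull ℝ (H : Set (ℝ × ℝ))

/-- The vertices of the convex hull of `S`, i.e. the extreme points of `S`. -/
def ExtremePts (S : Finset (ℝ × ℝ)) : Set (ℝ × ℝ) :=
  Set.extremePoints ℝ (convexHull ℝ (S : Set (ℝ × ℝ)))

namespace SixHoleAux

/-! ### Cross product basics -/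

/-- Twice the signed area of triangle `u v w`. -/
def cr (u v w : ℝ × ℝ) : ℝ :=
  (v.1 - u.1) * (w.2 - u.2) - (v.2 - u.2) * (w.1 - u.1)

lemma cr_self_left (u v : ℝ × ℝ) : cr u v u = 0 := by simp [cr]

lemma cr_self_right (u v : ℝ × ℝ) : cr u v v = 0 := by simp [cr]; ring

lemma cr_swap (u v w : ℝ × ℝ) : cr v u w = - cr u v w := by simp [cr]; ring

lemma cr_combo (u v : ℝ × ℝ) {a b : ℝ} (hab : a + b = 1) (x y : ℝ × ℝ) :
    cr u v (a • x + b • y) = a * cr u v x + b * cr u v y := by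
  have h1 : (a • x + b • y).1 = a * x.1 + b * y.1 := rfl
  have h2 : (a • x + b • y).2 = a * x.2 + b * y.2 := rfl
  simp only [cr, h1, h2]
  have : b = 1 - a := by linarith
  subst this; ring

lemma convex_cr_le (u v : ℝ × ℝ) : Convex ℝ {x : ℝ × ℝ | cr u v x ≤ 0} := by
  intro x hx y hy a b ha hb hab
  simp only [Set.mem_setOf_eq] at *
  rw [cr_combo u v hab]
  nlinarith

lemma convex_cr_lt (u v : ℝ × ℝ) : Convex ℝ {x : ℝ × ℝ | cr u v x < 0} := by
  intro x hx y hy a b ha hb hab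
  simp only [Set.mem_setOf_eq] at *
  rw [cr_combo u v hab]
  rcases eq_or_lt_of_le ha with h | h
  · simp [← h] at hab ⊢; rw [hab]; simpa [← h, hab] using hy
  · nlinarith

lemma hull_cr_le {u v : ℝ × ℝ} {A : Set (ℝ × ℝ)} (h : ∀ x ∈ A, cr u v x ≤ 0) :
    ∀ x ∈ convexHull ℝ A, cr u v x ≤ 0 :=
  fun _x hx => convexHull_min h (convex_cr_le u v) hx

lemma hull_cr_lt {u v : ℝ × ℝ} {A : Set (ℝ × ℝ)} (h : ∀ x ∈ A, cr u v x < 0) :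
    ∀ x ∈ convexHull ℝ A, cr u v x < 0 :=
  fun _x hx => convexHull_min h (convex_cr_lt u v) hx

/-- Face lemma: if `x` lies in the hull of `{w} ∪ B`, is on the line (`cr = 0`)
while all of `B` is strictly below it and `w` on it, then `x = w`. -/
lemma face_eq {u v w x : ℝ × ℝ} {B : Set (ℝ × ℝ)}
    (hw : cr u v w = 0) (hB : ∀ b ∈ B, cr u v b < 0)
    (hx : x ∈ convexHull ℝ (insert w B)) (hx0 : cr u v x = 0) : x = w := by
  rcases B.eq_empty_or_nonempty with rfl | hBne
  · simpa using hx
  · rw [convexHull_insert hBne] at hx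
    rw [mem_convexJoin] at hx
    obtain ⟨a, ha, z, hz, hxseg⟩ := hx
    rw [Set.mem_singleton_iff] at ha
    obtain ⟨s, t, hs, ht, hst, hxe⟩ := hxseg
    rw [ha] at hxe
    have hzlt : cr u v z < 0 := hull_cr_lt hB z hz
    have hcx : cr u v x = s * cr u v w + t * cr u v z := by
      rw [← hxe]; exact cr_combo u v hst w z
    have ht0 : t = 0 := by nlinarith
    have hs1 : s = 1 := by linarith
    rw [← hxe, ht0, hs1]; simp

lemma collinear_of_cr {p q r : ℝ × ℝ} (hpq : p ≠ q) (h : cr p q r = 0) :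
    Collinear ℝ ({p, q, r} : Set (ℝ × ℝ)) := by
  apply collinear_iff_of_mem (Set.mem_insert p {q, r}) |>.2
  refine ⟨q - p, ?_⟩
  intro x hx
  have key : ∀ t : ℝ, t * (q.1 - p.1) + p.1 = x.1 → t * (q.2 - p.2) + p.2 = x.2 →
      ∃ t : ℝ, x = t • (q - p) +ᵥ p := by
    intro t h1 h2
    refine ⟨t, ?_⟩
    have e1 : (t • (q - p) +ᵥ p).1 = t * (q.1 - p.1) + p.1 := rfl
    have e2 : (t • (q - p) +ᵥ p).2 = t * (q.2 - p.2) + p.2 := rfl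
    exact Prod.ext (by rw [e1, h1]) (by rw [e2, h2])
  rcases hx with rfl | rfl | rfl
  · exact key 0 (by ring) (by ring)
  · exact key 1 (by ring) (by ring)
  · rcases eq_or_ne (q.1 - p.1) 0 with h1 | h1
    · have h2 : q.2 - p.2 ≠ 0 := fun h2 =>
        hpq (Prod.ext (by linarith) (by linarith))
      have hx1 : x.1 - p.1 = 0 := by
        simp only [cr, h1] at h
        have := mul_eq_zero.1 (by linarith : (q.2 - p.2) * (x.1 - p.1) = 0)
        tauto
      exact key ((x.2 - p.2) / (q.2 - p.2)) (by rw [h1]; simp; linarith)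
        (by field_simp; ring)
    · have hx2 : (q.1 - p.1) * (x.2 - p.2) = (q.2 - p.2) * (x.1 - p.1) := by
        simp only [cr] at h; linarith
      exact key ((x.1 - p.1) / (q.1 - p.1)) (by field_simp; ring)
        (by field_simp; nlinarith [hx2])

/-! ### Extreme point lemmas -/

/-- An extreme point of `convexHull W` is not in the hull of any subset of
`convexHull W` not containing it. -/
lemma extreme_use {W A : Set (ℝ × ℝ)} {w : ℝ × ℝ}
    (hw : w ∈ Set.extremePoints ℝ (convexHull ℝ W))
    (hA : A ⊆ convexHull ℝ W) (hwA : w ∉ A) : w ∉ convexHull ℝ A := by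
  rw [(convex_convexHull ℝ W).mem_extremePoints_iff_convex_diff] at hw
  intro hmem
  have : convexHull ℝ A ⊆ convexHull ℝ W \ {w} := convexHull_min (by
    intro a ha
    exact ⟨hA ha, fun h => hwA (by rw [Set.mem_singleton_iff] at h; rw [← h]; exact ha)⟩) hw.2
  exact (this hmem).2 rfl

/-- If `h ∈ H` (finite) is not in the hull of `H \ {h}`, it is an extreme point
of `convexHull H`. -/
lemma extreme_build [DecidableEq (ℝ × ℝ)] {H : Finset (ℝ × ℝ)} {h : ℝ × ℝ} (hh : h ∈ H)
    (hnot : h ∉ convexHull ℝ ((H.erase h : Finset (ℝ × ℝ)) : Set (ℝ × ℝ))) :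
    h ∈ Set.extremePoints ℝ (convexHull ℝ (H : Set (ℝ × ℝ))) := by
  have hclosed : IsClosed (convexHull ℝ ((H.erase h : Finset (ℝ × ℝ)) : Set (ℝ × ℝ))) :=
    (Set.Finite.isClosed_convexHull ℝ (Finset.finite_toSet _))
  obtain ⟨f, u, hfu, hufh⟩ := geometric_hahn_banach_closed_point
    (convex_convexHull ℝ _) hclosed hnot
  have hHset : (H : Set (ℝ × ℝ)) = insert h ((H.erase h : Finset (ℝ × ℝ)) : Set (ℝ × ℝ)) := by
    rw [Finset.coe_erase]
    rw [Set.insert_diff_singleton]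
    rw [Set.insert_eq_self.2 (by exact_mod_cast hh)]
  have hfle : ∀ x ∈ convexHull ℝ (H : Set (ℝ × ℝ)), f x ≤ f h := by
    intro x hx
    have hcvx : Convex ℝ {y : ℝ × ℝ | f y ≤ f h} := by
      intro p hp q hq a b ha hb hab
      simp only [Set.mem_setOf_eq, map_add, map_smul, smul_eq_mul] at *
      have hsum : a * f h + b * f h = f h := by linear_combination f h * hab
      nlinarith [mul_le_mul_of_nonneg_left hp ha, mul_le_mul_of_nonneg_left hq hb]
    refine convexHull_min ?_ hcvx hx
    intro y hy
    rcases eq_or_ne y h with rfl | hyh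
    · simp
    · have : y ∈ convexHull ℝ ((H.erase h : Finset (ℝ × ℝ)) : Set (ℝ × ℝ)) :=
        subset_convexHull ℝ _ (by
          rw [Finset.coe_erase]; exact ⟨hy, hyh⟩)
      exact le_of_lt ((hfu y this).trans hufh)
  have hface : ∀ x ∈ convexHull ℝ (H : Set (ℝ × ℝ)), f x = f h → x = h := by
    intro x hx hfx
    rcases Set.eq_empty_or_nonempty ((H.erase h : Finset (ℝ × ℝ)) : Set (ℝ × ℝ)) with he | hne
    · rw [hHset, he] at hx
      simpa using hx
    · rw [hHset, convexHull_insert hne, mem_convexJoin] at hx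
      obtain ⟨a, ha, z, hz, hseg⟩ := hx
      rw [Set.mem_singleton_iff] at ha
      obtain ⟨s, t, hs, ht, hst, hxe⟩ := hseg
      rw [ha] at hxe
      have hfz : f z < u := hfu z hz
      have hfxc : f x = s * f h + t * f z := by
        rw [← hxe]; simp only [map_add, map_smul, smul_eq_mul]
      have hzh : f z < f h := hfz.trans hufh
      have h0 : t * (f h - f z) = 0 := by linear_combination -hfx + hfxc + f h * hst
      have ht0 : t = 0 := by
        rcases mul_eq_zero.1 h0 with h' | h'
        · exact h'
        · exfalso; nlinarith
      have hs1 : s = 1 := by linarith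
      rw [← hxe, ht0, hs1]; simp
  rw [mem_extremePoints]
  refine ⟨subset_convexHull ℝ _ (by exact_mod_cast hh), ?_⟩
  intro x₁ hx₁ x₂ hx₂ hseg
  rw [openSegment_eq_image] at hseg
  obtain ⟨t, ht, hte⟩ := hseg
  have hft : f h = (1 - t) * f x₁ + t * f x₂ := by
    rw [← hte]; simp only [map_add, map_smul, smul_eq_mul]
  have h1 : f x₁ ≤ f h := hfle _ hx₁
  have h2 : f x₂ ≤ f h := hfle _ hx₂
  have hfx1 : f x₁ = f h := by nlinarith [ht.1, ht.2]
  have hfx2 : f x₂ = f h := by nlinarith [ht.1, ht.2]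
  exact ⟨hface _ hx₁ hfx1, hface _ hx₂ hfx2⟩

/-! ### Slope key lemma -/

lemma key_lemma (a b : ℝ × ℝ) (ha : 0 < a.1 ∨ (a.1 = 0 ∧ 0 < a.2))
    (hb : 0 < b.1 ∨ (b.1 = 0 ∧ 0 < b.2)) (hab : a.1 * b.2 - a.2 * b.1 < 0) :
    (if b.1 = 0 then (⊤ : WithTop ℝ) else ((b.2 / b.1 : ℝ) : WithTop ℝ)) <
      (if a.1 = 0 then (⊤ : WithTop ℝ) else ((a.2 / a.1 : ℝ) : WithTop ℝ)) := by
  rcases ha with ha1 | ⟨ha1, ha2⟩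
  · rcases hb with hb1 | ⟨hb1, hb2⟩
    · rw [if_neg (ne_of_gt ha1), if_neg (ne_of_gt hb1)]
      rw [WithTop.coe_lt_coe]
      rw [div_lt_div_iff₀ hb1 ha1]
      nlinarith
    · exfalso; rw [hb1] at hab; nlinarith
  · rw [if_pos ha1]
    have hb1 : b.1 ≠ 0 := by
      intro h
      rw [ha1, h] at hab; nlinarith
    rw [if_neg hb1]
    exact WithTop.coe_lt_top _

/-! ### Convex position of the constructed polygons -/

lemma convexPos_insert2 [DecidableEq (ℝ × ℝ)] (W : Finset (ℝ × ℝ)) (hWpos : ConvexPos W)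
    (u v : ℝ × ℝ) (huv : u ≠ v)
    (huhull : u ∈ convexHull ℝ (W : Set (ℝ × ℝ)))
    (hvhull : v ∈ convexHull ℝ (W : Set (ℝ × ℝ)))
    (B : Finset (ℝ × ℝ)) (hBW : B ⊆ W)
    (hBneg : ∀ w ∈ B, cr u v w < 0) : ConvexPos (insert u (insert v B)) := by
  have huB : u ∉ B := fun h => by simpa [cr_self_left] using hBneg u h
  have hvB : v ∉ B := fun h => by simpa [cr_self_right] using hBneg v h
  have hBneg' : ∀ b ∈ (B : Set (ℝ × ℝ)), cr u v b < 0 := fun b hb => hBneg b hb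
  have hsub : ((insert u (insert v B) : Finset (ℝ × ℝ)) : Set (ℝ × ℝ)) ⊆
      convexHull ℝ (W : Set (ℝ × ℝ)) := by
    intro x hx
    simp only [Finset.coe_insert, Set.mem_insert_iff, Finset.mem_coe] at hx
    rcases hx with rfl | rfl | hx
    · exact huhull
    · exact hvhull
    · exact subset_convexHull ℝ _ (hBW hx)
  intro q hq
  apply extreme_build hq
  rcases Finset.mem_insert.1 hq with rfl | hq'
  · have he : (insert q (insert v B)).erase q = insert v B :=
      Finset.erase_insert (by simp only [Finset.mem_insert]; tauto)
    rw [he]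
    intro hmem
    rw [Finset.coe_insert] at hmem
    exact huv (face_eq (cr_self_right q v) hBneg' hmem (cr_self_left q v))
  rcases Finset.mem_insert.1 hq' with rfl | hqB
  · have he : (insert u (insert q B)).erase q = insert u B := by
      ext x
      simp only [Finset.mem_erase, Finset.mem_insert]
      constructor
      · rintro ⟨hxq, (rfl | rfl | hxB)⟩
        · exact Or.inl rfl
        · exact absurd rfl hxq
        · exact Or.inr hxB
      · rintro (rfl | hxB)
        · exact ⟨huv, Or.inl rfl⟩
        · exact ⟨fun h => hvB (h ▸ hxB), Or.inr (Or.inr hxB)⟩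
    rw [he]
    intro hmem
    rw [Finset.coe_insert] at hmem
    exact huv (face_eq (cr_self_left u q) hBneg' hmem (cr_self_right u q)).symm
  · intro hmem
    refine extreme_use (hWpos q (hBW hqB)) ?_ ?_ hmem
    · exact fun x hx => hsub (by
        simp only [Finset.mem_coe] at hx ⊢
        exact Finset.mem_of_mem_erase hx)
    · simp only [Finset.mem_coe]
      exact Finset.notMem_erase q _

/-- The pentagon construction: `u`, `v` on a line, three hull-vertices strictly
below it, everything else relevant strictly above. -/
lemma pentagon_is_hole [DecidableEq (ℝ × ℝ)] (S W : Finset (ℝ × ℝ)) (hWS : W ⊆ S)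
    (hWpos : ConvexPos W)
    (u v : ℝ × ℝ) (huv : u ≠ v) (huS : u ∈ S) (hvS : v ∈ S)
    (huhull : u ∈ convexHull ℝ (W : Set (ℝ × ℝ)))
    (hvhull : v ∈ convexHull ℝ (W : Set (ℝ × ℝ)))
    (A : Finset (ℝ × ℝ)) (hAW : A ⊆ W) (hAcard : A.card = 3)
    (hAneg : ∀ w ∈ A, cr u v w < 0)
    (hrest : ∀ s ∈ S, s ∈ convexHull ℝ (W : Set (ℝ × ℝ)) →
      s = u ∨ s = v ∨ s ∈ W ∨ 0 < cr u v s) :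
    IsHole S (insert u (insert v A)) 5 := by
  have huA : u ∉ A := fun h => by simpa [cr_self_left] using hAneg u h
  have hvA : v ∉ A := fun h => by simpa [cr_self_right] using hAneg v h
  have hsub : ((insert u (insert v A) : Finset (ℝ × ℝ)) : Set (ℝ × ℝ)) ⊆
      convexHull ℝ (W : Set (ℝ × ℝ)) := by
    intro x hx
    simp only [Finset.coe_insert, Set.mem_insert_iff, Finset.mem_coe] at hx
    rcases hx with rfl | rfl | hx
    · exact huhull
    · exact hvhull
    · exact subset_convexHull ℝ _ (hAW hx)
  have hhull_sub : convexHull ℝ ((insert u (insert v A) : Finset (ℝ × ℝ)) : Set (ℝ × ℝ)) ⊆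
      convexHull ℝ (W : Set (ℝ × ℝ)) :=
    convexHull_min hsub (convex_convexHull ℝ _)
  have hhull_le : ∀ x ∈ convexHull ℝ ((insert u (insert v A) : Finset (ℝ × ℝ)) : Set (ℝ × ℝ)),
      cr u v x ≤ 0 := by
    apply hull_cr_le
    intro x hx
    simp only [Finset.coe_insert, Set.mem_insert_iff, Finset.mem_coe] at hx
    rcases hx with h | h | hx
    · rw [h]; exact le_of_eq (cr_self_left u v)
    · rw [h]; exact le_of_eq (cr_self_right u v)
    · exact le_of_lt (hAneg x hx)
  refine ⟨?_, ?_, ?_, ?_⟩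
  · intro x hx
    rcases Finset.mem_insert.1 hx with rfl | hx'
    · exact huS
    rcases Finset.mem_insert.1 hx' with rfl | hxA
    · exact hvS
    · exact hWS (hAW hxA)
  · rw [Finset.card_insert_of_notMem (by simp only [Finset.mem_insert]; tauto),
      Finset.card_insert_of_notMem hvA, hAcard]
  · exact convexPos_insert2 W hWpos u v huv huhull hvhull A hAW hAneg
  · intro s hsS hsH hmem
    have hshull : s ∈ convexHull ℝ (W : Set (ℝ × ℝ)) := hhull_sub hmem
    rcases hrest s hsS hshull with rfl | rfl | hsW | hpos
    · exact hsH (Finset.mem_insert_self _ _)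
    · exact hsH (Finset.mem_insert_of_mem (Finset.mem_insert_self _ _))
    · exact extreme_use (hWpos s hsW) hsub (by simpa using hsH) hmem
    · exact absurd (hhull_le s hmem) (not_le.2 hpos)

end SixHoleAux


open SixHoleAux in
theorem six_convex_position_gives_5hole (S : Finset (ℝ × ℝ)) (hgp : GenPos S)
    (hhex : ∃ T : Finset (ℝ × ℝ), T ⊆ S ∧ T.card = 6 ∧ ConvexPos T) :
    ∃ H : Finset (ℝ × ℝ), IsHole S H 5 := by
  classical
  obtain ⟨T0, hT0S, hT0card, hT0pos⟩ := hhex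
  set n : Finset (ℝ × ℝ) → ℕ :=
    fun F => (S.filter (fun p => p ∈ convexHull ℝ (F : Set (ℝ × ℝ)))).card with hn
  have h𝒞ne : ((S.powersetCard 6).filter (fun F => ConvexPos F)).Nonempty :=
    ⟨T0, by rw [Finset.mem_filter, Finset.mem_powersetCard]; exact ⟨⟨hT0S, hT0card⟩, hT0pos⟩⟩
  obtain ⟨W, hW𝒞, hWmin⟩ := Finset.exists_min_image _ n h𝒞ne
  rw [Finset.mem_filter, Finset.mem_powersetCard] at hW𝒞
  obtain ⟨⟨hWS, hWcard⟩, hWpos⟩ := hW𝒞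
  set T : Finset (ℝ × ℝ) :=
    (S.filter (fun p => p ∈ convexHull ℝ (W : Set (ℝ × ℝ)))) \ W with hT
  have hTmem : ∀ {s : ℝ × ℝ}, s ∈ T ↔
      s ∈ S ∧ s ∈ convexHull ℝ (W : Set (ℝ × ℝ)) ∧ s ∉ W := by
    intro s
    rw [hT, Finset.mem_sdiff, Finset.mem_filter]
    tauto
  have hWT : ∀ s ∈ S, s ∈ convexHull ℝ (W : Set (ℝ × ℝ)) → s ∈ W ∨ s ∈ T := by
    intro s hs hmem
    by_cases hsW : s ∈ W
    · exact Or.inl hsW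
    · exact Or.inr (hTmem.2 ⟨hs, hmem, hsW⟩)
  have hcrne : ∀ p ∈ S, ∀ q ∈ S, ∀ r ∈ S, p ≠ q → p ≠ r → q ≠ r → cr p q r ≠ 0 :=
    fun p hp q hq r hr hpq hpr hqr h0 =>
      hgp p hp q hq r hr hpq hpr hqr (collinear_of_cr hpq h0)
  rcases T.eq_empty_or_nonempty with hTe | hTne
  · -- T empty: drop a vertex of W
    obtain ⟨w0, hw0⟩ : W.Nonempty := Finset.card_pos.1 (by rw [hWcard]; norm_num)
    have hsubW : ((W.erase w0 : Finset (ℝ × ℝ)) : Set (ℝ × ℝ)) ⊆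
        convexHull ℝ (W : Set (ℝ × ℝ)) := fun x hx =>
      subset_convexHull ℝ _ (Finset.mem_of_mem_erase (by exact_mod_cast hx))
    have hhull_sub : convexHull ℝ ((W.erase w0 : Finset (ℝ × ℝ)) : Set (ℝ × ℝ)) ⊆
        convexHull ℝ (W : Set (ℝ × ℝ)) := convexHull_min hsubW (convex_convexHull ℝ _)
    refine ⟨W.erase w0, fun x hx => hWS (Finset.mem_of_mem_erase hx), ?_, ?_, ?_⟩
    · rw [Finset.card_erase_of_mem hw0, hWcard]
    · intro p hp
      apply extreme_build hp
      refine extreme_use (hWpos p (Finset.mem_of_mem_erase hp)) ?_ ?_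
      · intro x hx
        exact subset_convexHull ℝ _
          (Finset.mem_of_mem_erase (Finset.mem_of_mem_erase (by exact_mod_cast hx)))
      · simp only [Finset.mem_coe]
        exact Finset.notMem_erase p _
    · intro s hsS hsH hmem
      have hshull : s ∈ convexHull ℝ (W : Set (ℝ × ℝ)) := hhull_sub hmem
      rcases hWT s hsS hshull with hsW | hsT
      · exact extreme_use (hWpos s hsW) hsubW (fun h => hsH (Finset.mem_coe.1 h)) hmem
      · rw [hTe] at hsT; simp at hsT
  · rcases eq_or_lt_of_le (Finset.one_le_card.2 hTne) with hT1 | hT2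
    · -- |T| = 1
      obtain ⟨p, hTp⟩ := Finset.card_eq_one.1 hT1.symm
      have hpT : p ∈ T := by rw [hTp]; exact Finset.mem_singleton_self p
      obtain ⟨hpS, hphull, hpW⟩ := hTmem.1 hpT
      obtain ⟨v0, hv0W⟩ : W.Nonempty := Finset.card_pos.1 (by rw [hWcard]; norm_num)
      have hv0S : v0 ∈ S := hWS hv0W
      have hpv0 : p ≠ v0 := fun h => hpW (h ▸ hv0W)
      have hv0hull : v0 ∈ convexHull ℝ (W : Set (ℝ × ℝ)) := subset_convexHull ℝ _ hv0W
      set W5 := W.erase v0 with hW5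
      have hW5card : W5.card = 5 := by rw [hW5, Finset.card_erase_of_mem hv0W, hWcard]
      have hcrW5 : ∀ w ∈ W5, cr p v0 w ≠ 0 := by
        intro w hw
        have hwW : w ∈ W := Finset.mem_of_mem_erase hw
        exact hcrne p hpS v0 hv0S w (hWS hwW) hpv0 (fun h => hpW (h ▸ hwW))
          (Finset.ne_of_mem_erase hw).symm
      set A := W5.filter (fun w => cr p v0 w < 0) with hA
      set B := W5.filter (fun w => ¬ cr p v0 w < 0) with hB
      have hcards : A.card + B.card = 5 := by
        rw [hA, hB, Finset.card_filter_add_card_filter_not]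
        exact hW5card
      have hrest1 : ∀ s ∈ S, s ∈ convexHull ℝ (W : Set (ℝ × ℝ)) →
          s ∈ W ∨ s = p := by
        intro s hsS hsh
        rcases hWT s hsS hsh with h | h
        · exact Or.inl h
        · right; rw [hTp] at h; exact Finset.mem_singleton.1 h
      rcases le_or_gt 3 A.card with h3 | h3
      · obtain ⟨A3, hA3A, hA3card⟩ := Finset.exists_subset_card_eq h3
        refine ⟨insert p (insert v0 A3), pentagon_is_hole S W hWS hWpos p v0 hpv0 hpS hv0S
          hphull hv0hull A3 (fun x hx => Finset.mem_of_mem_erase (Finset.mem_of_mem_filter x (hA3A hx)))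
          hA3card (fun w hw => (Finset.mem_filter.1 (hA3A hw)).2) ?_⟩
        intro s hsS hsh
        rcases hrest1 s hsS hsh with h | h
        · exact Or.inr (Or.inr (Or.inl h))
        · exact Or.inl h
      · have h3B : 3 ≤ B.card := by omega
        obtain ⟨B3, hB3B, hB3card⟩ := Finset.exists_subset_card_eq h3B
        have hB3neg : ∀ w ∈ B3, cr v0 p w < 0 := by
          intro w hw
          have hw' := Finset.mem_filter.1 (hB3B hw)
          have := hcrW5 w hw'.1
          rw [cr_swap]
          rcases lt_trichotomy (cr p v0 w) 0 with h | h | h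
          · exact absurd h hw'.2
          · exact absurd h this
          · linarith
        refine ⟨insert v0 (insert p B3), pentagon_is_hole S W hWS hWpos v0 p hpv0.symm hv0S hpS
          hv0hull hphull B3 (fun x hx => Finset.mem_of_mem_erase (Finset.mem_of_mem_filter x (hB3B hx)))
          hB3card hB3neg ?_⟩
        intro s hsS hsh
        rcases hrest1 s hsS hsh with h | h
        · exact Or.inr (Or.inr (Or.inl h))
        · exact Or.inr (Or.inl h)
    · -- |T| ≥ 2
      obtain ⟨u, huT, humin⟩ := Finset.exists_min_image T (fun p => toLex p) hTne
      obtain ⟨huS, huhull, huW⟩ := hTmem.1 huT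
      have hTune : (T.erase u).Nonempty := by
        rw [← Finset.card_pos, Finset.card_erase_of_mem huT]
        omega
      have hlexpos : ∀ w ∈ T, w ≠ u →
          0 < w.1 - u.1 ∨ (w.1 - u.1 = 0 ∧ 0 < w.2 - u.2) := by
        intro w hw hwu
        have hlt : toLex u < toLex w :=
          lt_of_le_of_ne (humin w hw) (fun h => hwu (toLex.injective h).symm)
        rw [Prod.Lex.lt_iff] at hlt
        simp only [ofLex_toLex] at hlt
        rcases hlt with h | ⟨h1, h2⟩
        · left; linarith
        · right; constructor <;> [linarith; linarith]
      set key : (ℝ × ℝ) → WithTop ℝ := fun w =>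
        if w.1 - u.1 = 0 then (⊤ : WithTop ℝ) else ((w.2 - u.2) / (w.1 - u.1) : ℝ) with hkey
      obtain ⟨v, hvTe, hvmin⟩ := Finset.exists_min_image (T.erase u) key hTune
      have hvT : v ∈ T := Finset.mem_of_mem_erase hvTe
      have hvu : v ≠ u := Finset.ne_of_mem_erase hvTe
      obtain ⟨hvS, hvhull, hvW⟩ := hTmem.1 hvT
      have huv : u ≠ v := hvu.symm
      have hTside : ∀ w ∈ T, w ≠ u → w ≠ v → 0 < cr u v w := by
        intro w hw hwu hwv
        have hwS : w ∈ S := (hTmem.1 hw).1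
        have hne : cr u v w ≠ 0 := hcrne u huS v hvS w hwS huv hwu.symm hwv.symm
        rcases lt_trichotomy (cr u v w) 0 with hlt | h0 | hgt
        · exfalso
          have hklt : key w < key v := by
            have := key_lemma (v.1 - u.1, v.2 - u.2) (w.1 - u.1, w.2 - u.2)
              (hlexpos v hvT hvu) (hlexpos w hw hwu)
              (by simp only [cr] at hlt; simpa using hlt)
            simpa [hkey] using this
          exact absurd (hvmin w (Finset.mem_erase.2 ⟨hwu, hw⟩)) (not_le.2 hklt)
        · exact absurd h0 hne
        · exact hgt
      have hcrWne : ∀ w ∈ W, cr u v w ≠ 0 := by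
        intro w hw
        exact hcrne u huS v hvS w (hWS hw) huv
          (fun h => huW (h ▸ hw)) (fun h => hvW (h ▸ hw))
      set A := W.filter (fun w => cr u v w < 0) with hA
      set B := W.filter (fun w => ¬ cr u v w < 0) with hB
      have hcards : A.card + B.card = 6 := by
        rw [hA, hB, Finset.card_filter_add_card_filter_not]
        exact hWcard
      have hBpos : ∀ w ∈ B, 0 < cr u v w := by
        intro w hw
        have hw' := Finset.mem_filter.1 hw
        rcases lt_trichotomy (cr u v w) 0 with h | h | h
        · exact absurd h hw'.2
        · exact absurd h (hcrWne w hw'.1)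
        · exact h
      have hAne : A.Nonempty := by
        rcases Finset.eq_empty_or_nonempty A with hAe | h
        · exfalso
          have hallpos : ∀ w ∈ (W : Set (ℝ × ℝ)), cr v u w < 0 := by
            intro w hw
            have hwW : w ∈ W := hw
            have : w ∈ B := by
              rw [hB, Finset.mem_filter]
              refine ⟨hwW, fun hlt => ?_⟩
              have : w ∈ A := by rw [hA, Finset.mem_filter]; exact ⟨hwW, hlt⟩
              rw [hAe] at this; simp at this
            rw [cr_swap]; linarith [hBpos w this]
          have := hull_cr_lt hallpos u huhull
          rw [cr_self_right] at this
          exact lt_irrefl 0 this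
        · exact h
      rcases le_or_gt 3 A.card with h3 | h3
      · obtain ⟨A3, hA3A, hA3card⟩ := Finset.exists_subset_card_eq h3
        refine ⟨insert u (insert v A3), pentagon_is_hole S W hWS hWpos u v huv huS hvS
          huhull hvhull A3 (fun x hx => Finset.mem_of_mem_filter x (hA3A hx))
          hA3card (fun w hw => (Finset.mem_filter.1 (hA3A hw)).2) ?_⟩
        intro s hsS hsh
        rcases hWT s hsS hsh with h | h
        · exact Or.inr (Or.inr (Or.inl h))
        · rcases eq_or_ne s u with rfl | hsu
          · exact Or.inl rfl
          rcases eq_or_ne s v with rfl | hsv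
          · exact Or.inr (Or.inl rfl)
          · exact Or.inr (Or.inr (Or.inr (hTside s h hsu hsv)))
      · -- swap: contradiction with minimality
        exfalso
        have h4B : 4 ≤ B.card := by omega
        obtain ⟨B4, hB4B, hB4card⟩ := Finset.exists_subset_card_eq h4B
        have hB4W : B4 ⊆ W := fun x hx => Finset.mem_of_mem_filter x (hB4B hx)
        have hB4neg : ∀ w ∈ B4, cr v u w < 0 := by
          intro w hw
          rw [cr_swap]
          linarith [hBpos w (hB4B hw)]
        have huB4 : u ∉ B4 := fun h => huW (hB4W h)
        have hvB4 : v ∉ B4 := fun h => hvW (hB4W h)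
        set W' := insert u (insert v B4) with hW'
        have hW'pos : ConvexPos W' := by
          rw [hW', Finset.insert_comm]
          exact convexPos_insert2 W hWpos v u hvu hvhull huhull B4 hB4W hB4neg
        have hW'S : W' ⊆ S := by
          intro x hx
          rcases Finset.mem_insert.1 hx with rfl | hx'
          · exact huS
          rcases Finset.mem_insert.1 hx' with rfl | hxB
          · exact hvS
          · exact hWS (hB4W hxB)
        have hW'card : W'.card = 6 := by
          rw [hW', Finset.card_insert_of_notMem (by
              simp only [Finset.mem_insert]; push_neg; exact ⟨huv, huB4⟩),
            Finset.card_insert_of_notMem hvB4, hB4card]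
        have hW'mem : W' ∈ (S.powersetCard 6).filter (fun F => ConvexPos F) := by
          rw [Finset.mem_filter, Finset.mem_powersetCard]
          exact ⟨⟨hW'S, hW'card⟩, hW'pos⟩
        have hmin := hWmin W' hW'mem
        -- strict decrease
        have hW'hull : convexHull ℝ (W' : Set (ℝ × ℝ)) ⊆ convexHull ℝ (W : Set (ℝ × ℝ)) := by
          apply convexHull_min ?_ (convex_convexHull ℝ _)
          intro x hx
          simp only [hW', Finset.coe_insert, Set.mem_insert_iff, Finset.mem_coe] at hx
          rcases hx with rfl | rfl | hx
          · exact huhull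
          · exact hvhull
          · exact subset_convexHull ℝ _ (hB4W hx)
        have hW'le : ∀ x ∈ convexHull ℝ (W' : Set (ℝ × ℝ)), cr v u x ≤ 0 := by
          apply hull_cr_le
          intro x hx
          simp only [hW', Finset.coe_insert, Set.mem_insert_iff, Finset.mem_coe] at hx
          rcases hx with h | h | hx
          · rw [h]; exact le_of_eq (cr_self_right v u)
          · rw [h]; exact le_of_eq (cr_self_left v u)
          · exact le_of_lt (hB4neg x hx)
        obtain ⟨a, haA⟩ := hAne
        have haW : a ∈ W := (Finset.mem_filter.1 haA).1
        have haneg : cr u v a < 0 := (Finset.mem_filter.1 haA).2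
        have hanotW' : a ∉ convexHull ℝ (W' : Set (ℝ × ℝ)) := by
          intro hmem
          have := hW'le a hmem
          rw [cr_swap] at this
          linarith
        have hssub : S.filter (fun p => p ∈ convexHull ℝ (W' : Set (ℝ × ℝ))) ⊂
            S.filter (fun p => p ∈ convexHull ℝ (W : Set (ℝ × ℝ))) := by
          rw [Finset.ssubset_iff_of_subset (by
            intro x hx
            rw [Finset.mem_filter] at hx ⊢
            exact ⟨hx.1, hW'hull hx.2⟩)]
          refine ⟨a, ?_, ?_⟩
          · rw [Finset.mem_filter]
            exact ⟨hWS haW, subset_convexHull ℝ _ haW⟩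
          · rw [Finset.mem_filter]
            push_neg
            intro _
            exact hanotW'
        have hcc := Finset.card_lt_card hssub
        have hmin' : (S.filter (fun p => p ∈ convexHull ℝ (W : Set (ℝ × ℝ)))).card ≤
            (S.filter (fun p => p ∈ convexHull ℝ (W' : Set (ℝ × ℝ)))).card := hmin
        omega
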